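/- Let n ≥ 1, λ ≥ 1, 0 < c ≤ 1, d_σ > 0. Let p_0 be a standard Gaussian random vector in ℝⁿ and let (ξ_t)_{t∈ℕ} be i.i.d. ℝⁿ-valued random vectors, independent of p_0, each distributed as the vector (N_{1:λ}, N_2, …, N_n) with independent coordinates, first coordinate distributed as the minimum of λ i.i.d. standard normals and the other n−1 coordinates standard normal. Define p_{t+1} = (1−c) p_t + √(c(2−c)) ξ_t and σ_{t+1} = σ_t · exp((c/(2 d_σ)) (‖p_{t+1}‖²/n − 1)). Then lim_{t→∞} E(ln(σ_{t+1}/σ_t)) = (1/(2 d_σ n)) (2(1−c) E(N_{1:λ})² + c (E(N_{1:λ}²) − 1)). -/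

import Mathlib

open MeasureTheory ProbabilityTheory Filter Real
open scoped NNReal ENNReal

/-! ### Auxiliary analysis lemma: limit of an affine recursion -/

lemma aux_affine_rec {r : ℝ} (hr0 : 0 ≤ r) (hr1 : r < 1) {u : ℕ → ℝ} {L : ℝ}
    (hu : Tendsto u atTop (nhds L)) {x : ℕ → ℝ} (hx : ∀ t, x (t + 1) = r * x t + u t) :
    Tendsto x atTop (nhds (L / (1 - r))) := by
  have h1r : 0 < 1 - r := by linarith
  set M := L / (1 - r) with hM
  have hML : r * M + L = M := by rw [hM]; field_simp; ring
  set e := fun t => x t - M with he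
  suffices h : Tendsto e atTop (nhds 0) by
    have := h.add_const M
    simpa [he] using this
  rw [Metric.tendsto_atTop]
  intro ε hε
  have hd : Tendsto (fun t => u t - L) atTop (nhds 0) := by
    simpa using hu.sub_const L
  obtain ⟨T, hT⟩ := (Metric.tendsto_atTop.1 hd) (ε / 2 * (1 - r)) (by positivity)
  have key : ∀ k, |e (T + k)| ≤ r ^ k * |e T| + ε / 2 := by
    intro k
    induction k with
    | zero => simp; positivity
    | succ k ih =>
      have hrec : e (T + (k + 1)) = r * e (T + k) + (u (T + k) - L) := by
        simp only [he]
        rw [show T + (k + 1) = (T + k) + 1 from rfl, hx]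
        linarith [hML]
      have hu' : |u (T + k) - L| ≤ ε / 2 * (1 - r) := by
        have := hT (T + k) (Nat.le_add_right _ _)
        rw [Real.dist_eq] at this
        simpa using this.le
      calc |e (T + (k + 1))| ≤ r * |e (T + k)| + |u (T + k) - L| := by
            rw [hrec]
            refine (abs_add_le _ _).trans ?_
            gcongr
            rw [abs_mul, abs_of_nonneg hr0]
        _ ≤ r * (r ^ k * |e T| + ε / 2) + ε / 2 * (1 - r) := by gcongr
        _ = r ^ (k + 1) * |e T| + ε / 2 := by ring
  have hpow : Tendsto (fun k => r ^ k * |e T|) atTop (nhds 0) := by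
    simpa using (tendsto_pow_atTop_nhds_zero_of_lt_one hr0 hr1).mul_const |e T|
  obtain ⟨K, hK⟩ := (Metric.tendsto_atTop.1 hpow) (ε / 2) (by positivity)
  refine ⟨T + K, fun t ht => ?_⟩
  have h1 : |e t| ≤ r ^ (t - T) * |e T| + ε / 2 := by
    have := key (t - T)
    rwa [Nat.add_sub_cancel' (le_trans (Nat.le_add_right _ _) ht)] at this
  have h2 : r ^ (t - T) * |e T| < ε / 2 := by
    have := hK (t - T) (by omega)
    rw [Real.dist_eq] at this
    calc r ^ (t - T) * |e T| ≤ |r ^ (t - T) * |e T| - 0| := by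
          rw [sub_zero]; exact le_abs_self _
      _ < ε / 2 := this
  rw [Real.dist_eq, sub_zero]
  calc |e t| ≤ r ^ (t - T) * |e T| + ε / 2 := h1
    _ < ε / 2 + ε / 2 := by linarith
    _ = ε := by ring

/-! ### Moments of the standard Gaussian -/

lemma aux_pdf01 : ∀ x : ℝ,
    gaussianPDFReal 0 1 x = (Real.sqrt (2 * π))⁻¹ * Real.exp (-(2⁻¹ : ℝ) * x ^ 2) := by
  intro x
  rw [gaussianPDFReal]
  norm_num
  left
  ring

lemma aux_integral_gaussian01 (f : ℝ → ℝ) :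
    ∫ x, f x ∂(gaussianReal 0 1) = ∫ x, gaussianPDFReal 0 1 x * f x := by
  rw [gaussianReal_of_var_ne_zero 0 one_ne_zero]
  have h : gaussianPDF 0 1 = fun x => ((Real.toNNReal (gaussianPDFReal 0 1 x) : ℝ≥0) : ℝ≥0∞) := by
    ext x; rw [gaussianPDF, ENNReal.ofReal]
  rw [h, integral_withDensity_eq_integral_smul
    (measurable_gaussianPDFReal 0 1).real_toNNReal f]
  congr 1 with x
  simp only [NNReal.smul_def, smul_eq_mul, Real.coe_toNNReal _ (gaussianPDFReal_nonneg 0 1 x)]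

lemma aux_integrable_gaussian01_iff (f : ℝ → ℝ) :
    Integrable f (gaussianReal 0 1) ↔
      Integrable (fun x => gaussianPDFReal 0 1 x * f x) volume := by
  rw [gaussianReal_of_var_ne_zero 0 one_ne_zero]
  have h : gaussianPDF 0 1 = fun x => ((Real.toNNReal (gaussianPDFReal 0 1 x) : ℝ≥0) : ℝ≥0∞) := by
    ext x; rw [gaussianPDF, ENNReal.ofReal]
  rw [h, integrable_withDensity_iff_integrable_smul
    (measurable_gaussianPDFReal 0 1).real_toNNReal]
  constructor <;> intro hi <;>
  · refine hi.congr (Eventually.of_forall fun x => ?_)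
    simp only [NNReal.smul_def, smul_eq_mul, Real.coe_toNNReal _ (gaussianPDFReal_nonneg 0 1 x)]

lemma aux_int_sq_exp : Integrable (fun x : ℝ => x ^ 2 * Real.exp (-(2⁻¹:ℝ) * x ^ 2)) := by
  have hb : Integrable (fun x : ℝ => 4 * Real.exp (-(4⁻¹:ℝ) * x ^ 2)) :=
    (integrable_exp_neg_mul_sq (by norm_num)).const_mul 4
  refine hb.mono' ?_ (Eventually.of_forall fun x => ?_)
  · exact ((continuous_pow 2).mul
      ((continuous_const.mul (continuous_pow 2)).rexp)).aestronglyMeasurable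
  · have h1 : x ^ 2 ≤ 4 * Real.exp ((4⁻¹:ℝ) * x ^ 2) := by
      have := Real.add_one_le_exp ((4⁻¹:ℝ) * x ^ 2)
      nlinarith [Real.exp_pos ((4⁻¹:ℝ) * x ^ 2), sq_nonneg x]
    have h2 : (0:ℝ) < Real.exp (-(2⁻¹:ℝ) * x ^ 2) := Real.exp_pos _
    rw [Real.norm_eq_abs, abs_of_nonneg (by positivity)]
    calc x ^ 2 * Real.exp (-(2⁻¹:ℝ) * x ^ 2)
        ≤ 4 * Real.exp ((4⁻¹:ℝ) * x ^ 2) * Real.exp (-(2⁻¹:ℝ) * x ^ 2) :=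
          mul_le_mul_of_nonneg_right h1 h2.le
      _ = 4 * Real.exp (-(4⁻¹:ℝ) * x ^ 2) := by
          rw [mul_assoc, ← Real.exp_add]; ring_nf

lemma aux_int_id_exp : Integrable (fun x : ℝ => x * Real.exp (-(2⁻¹:ℝ) * x ^ 2)) := by
  have := integrable_mul_exp_neg_mul_sq (b := (2⁻¹:ℝ)) (by norm_num)
  refine this.congr (Eventually.of_forall fun x => ?_)
  ring_nf

lemma aux_integral_sq_exp :
    ∫ x : ℝ, x ^ 2 * Real.exp (-(2⁻¹:ℝ) * x ^ 2) = Real.sqrt (2 * π) := by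
  have hderiv : ∀ x : ℝ, HasDerivAt (fun x : ℝ => -x * Real.exp (-(2⁻¹:ℝ) * x ^ 2))
      ((x ^ 2 - 1) * Real.exp (-(2⁻¹:ℝ) * x ^ 2)) x := by
    intro x
    have h1 : HasDerivAt (fun x : ℝ => -(2⁻¹:ℝ) * x ^ 2) (-(2⁻¹:ℝ) * (2 * x)) x := by
      simpa using ((hasDerivAt_pow 2 x).const_mul (-(2⁻¹:ℝ)))
    have h2 : HasDerivAt (fun x : ℝ => Real.exp (-(2⁻¹:ℝ) * x ^ 2))
        (Real.exp (-(2⁻¹:ℝ) * x ^ 2) * (-(2⁻¹:ℝ) * (2 * x))) x := h1.exp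
    have h3 : HasDerivAt (fun x : ℝ => -x * Real.exp (-(2⁻¹:ℝ) * x ^ 2))
        (-1 * Real.exp (-(2⁻¹:ℝ) * x ^ 2) + -x * (Real.exp (-(2⁻¹:ℝ) * x ^ 2) * (-(2⁻¹:ℝ) * (2 * x)))) x :=
      (hasDerivAt_neg x).mul h2
    convert h3 using 1
    ring
  have hint : Integrable (fun x : ℝ => (x ^ 2 - 1) * Real.exp (-(2⁻¹:ℝ) * x ^ 2)) := by
    have := aux_int_sq_exp.sub (integrable_exp_neg_mul_sq
        (show (0:ℝ) < 2⁻¹ by norm_num))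
    refine this.congr (Eventually.of_forall fun x => ?_)
    simp only [Pi.sub_apply]
    ring
  have hF : Integrable (fun x : ℝ => -x * Real.exp (-(2⁻¹:ℝ) * x ^ 2)) := by
    refine aux_int_id_exp.neg.congr (Eventually.of_forall fun x => ?_)
    simp only [Pi.neg_apply]
    ring
  have h0 := integral_eq_zero_of_hasDerivAt_of_integrable hderiv hint hF
  have hsplit : ∫ x : ℝ, (x ^ 2 - 1) * Real.exp (-(2⁻¹:ℝ) * x ^ 2)
      = (∫ x : ℝ, x ^ 2 * Real.exp (-(2⁻¹:ℝ) * x ^ 2))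
        - ∫ x : ℝ, Real.exp (-(2⁻¹:ℝ) * x ^ 2) := by
    rw [← integral_sub aux_int_sq_exp (integrable_exp_neg_mul_sq (by norm_num))]
    congr 1 with x
    ring
  have hg : ∫ x : ℝ, Real.exp (-(2⁻¹:ℝ) * x ^ 2) = Real.sqrt (2 * π) := by
    rw [integral_gaussian]
    congr 1
    rw [div_eq_mul_inv, mul_comm]
    norm_num
  rw [hsplit, hg] at h0
  linarith

lemma aux_gaussian_sq_int : Integrable (fun x : ℝ => x ^ 2) (gaussianReal 0 1) := by
  rw [aux_integrable_gaussian01_iff]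
  refine (aux_int_sq_exp.const_mul ((Real.sqrt (2 * π))⁻¹)).congr
    (Eventually.of_forall fun x => ?_)
  simp only [aux_pdf01]; ring

lemma aux_gaussian_memLp2 : MemLp (fun x : ℝ => x) 2 (gaussianReal 0 1) := by
  refine (memLp_two_iff_integrable_sq ?_).2 ?_
  · exact aestronglyMeasurable_id
  · simpa [pow_two] using aux_gaussian_sq_int

lemma aux_gaussian_integral_sq : ∫ x, x ^ 2 ∂(gaussianReal 0 1) = 1 := by
  rw [aux_integral_gaussian01]
  have heq : (fun x : ℝ => gaussianPDFReal 0 1 x * x ^ 2)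
      = fun x : ℝ => (Real.sqrt (2 * π))⁻¹ * (x ^ 2 * Real.exp (-(2⁻¹:ℝ) * x ^ 2)) :=
    funext fun x => by simp only [aux_pdf01]; ring
  rw [heq, integral_const_mul, aux_integral_sq_exp, inv_mul_cancel₀]
  positivity

lemma aux_gaussian_integrable_id : Integrable (fun x : ℝ => x) (gaussianReal 0 1) :=
  aux_gaussian_memLp2.integrable one_le_two

lemma aux_gaussian_integral_id : ∫ x, x ∂(gaussianReal 0 1) = 0 := by
  have hmap : (gaussianReal 0 1).map (fun x => (-1 : ℝ) * x) = gaussianReal 0 1 := by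
    have := gaussianReal_map_const_mul (μ := 0) (v := 1) (-1 : ℝ)
    simp only [mul_zero, neg_zero] at this
    rw [this]
    congr 1
    rw [← NNReal.coe_inj]
    norm_num
  have h1 : ∫ x, x ∂(gaussianReal 0 1) = ∫ x, (-1 : ℝ) * x ∂(gaussianReal 0 1) := by
    conv_lhs => rw [← hmap]
    exact integral_map (measurable_const_mul (-1:ℝ)).aemeasurable aestronglyMeasurable_id
  have h2 : ∫ x, (-1 : ℝ) * x ∂(gaussianReal 0 1) = -∫ x, x ∂(gaussianReal 0 1) := by
    rw [integral_const_mul]; ring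
  have := h1.trans h2
  linarith

/-! ### Marginals of product measures -/

lemma aux_map_eval_pi {ι : Type*} [Fintype ι] {α : ι → Type*} [∀ i, MeasurableSpace (α i)]
    (μm : ∀ i, Measure (α i)) [∀ i, IsProbabilityMeasure (μm i)] (i : ι) :
    (Measure.pi μm).map (Function.eval i) = μm i := by
  classical
  ext s hs
  rw [Measure.map_apply (measurable_pi_apply i) hs]
  have hpre : Function.eval i ⁻¹' s
      = Set.pi Set.univ (Function.update (fun j => (Set.univ : Set (α j))) i s) := by
    ext x
    simp only [Set.mem_preimage, Set.mem_pi, Set.mem_univ, true_implies, Function.eval]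
    constructor
    · intro hx j
      rcases eq_or_ne j i with rfl | hj
      · rwa [Function.update_self]
      · rw [Function.update_of_ne hj]; trivial
    · intro hx
      have := hx i
      rwa [Function.update_self] at this
  rw [hpre, Measure.pi_pi]
  rw [Fintype.prod_eq_single i]
  · rw [Function.update_self]
  · intro j hj
    rw [Function.update_of_ne hj]
    exact measure_univ

/-- Law of the minimum (first order statistic) of `lam` i.i.d. standard normal
random variables. -/
noncomputable def minLaw (lam : ℕ) : Measure ℝ :=
  (Measure.pi fun _ : Fin lam => gaussianReal 0 1).map fun x => ⨅ i, x i

instance (lam : ℕ) : IsProbabilityMeasure (minLaw lam) := by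
  unfold minLaw
  exact Measure.isProbabilityMeasure_map
    ((Measurable.iInf fun i => measurable_pi_apply i).aemeasurable)

lemma aux_memLp2_eval {ι : Type*} [Fintype ι] (j : ι) :
    MemLp (fun x : ι → ℝ => x j) 2 (Measure.pi fun _ : ι => gaussianReal 0 1) := by
  have h := aux_map_eval_pi (fun _ : ι => gaussianReal 0 1) j
  have := aux_gaussian_memLp2
  rw [← h] at this
  exact (memLp_map_measure_iff aestronglyMeasurable_id
    (measurable_pi_apply j).aemeasurable).1 this

lemma aux_memLp2_inf {lam : ℕ} (hlam : 1 ≤ lam) :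
    MemLp (fun x : Fin lam → ℝ => ⨅ i, x i) 2
      (Measure.pi fun _ : Fin lam => gaussianReal 0 1) := by
  have : Nonempty (Fin lam) := ⟨⟨0, hlam⟩⟩
  have hsum : MemLp (fun x : Fin lam → ℝ => ∑ j, |x j|) 2
      (Measure.pi fun _ : Fin lam => gaussianReal 0 1) := by
    have := fun j : Fin lam => (aux_memLp2_eval (ι := Fin lam) j).abs
    have h2 := memLp_finset_sum' Finset.univ (fun j (_ : j ∈ Finset.univ) => this j)
    have he : (∑ i : Fin lam, |fun x : Fin lam → ℝ => x i|)
        = fun x : Fin lam → ℝ => ∑ j, |x j| := by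
      funext x
      simp [Finset.sum_apply, Pi.abs_apply]
    rwa [he] at h2
  refine MemLp.of_le hsum ?_ (Eventually.of_forall fun x => ?_)
  · exact (Measurable.iInf fun i => measurable_pi_apply i).aestronglyMeasurable
  · obtain ⟨j, hj⟩ := Finite.exists_min x
    have hinf : ⨅ i, x i = x j :=
      le_antisymm (ciInf_le (Finite.bddBelow_range x) j) (le_ciInf hj)
    rw [Real.norm_eq_abs, Real.norm_eq_abs, hinf]
    have h1 : |x j| ≤ ∑ i, |x i| :=
      Finset.single_le_sum (fun i _ => abs_nonneg (x i)) (Finset.mem_univ j)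
    have h2 : (0:ℝ) ≤ ∑ i, |x i| := Finset.sum_nonneg fun i _ => abs_nonneg _
    rwa [abs_of_nonneg h2]

lemma aux_memLp2_minLaw {lam : ℕ} (hlam : 1 ≤ lam) :
    MemLp (fun x : ℝ => x) 2 (minLaw lam) := by
  unfold minLaw
  exact (memLp_map_measure_iff aestronglyMeasurable_id
    (Measurable.iInf fun i => measurable_pi_apply i).aemeasurable).2
    (aux_memLp2_inf hlam)

/-- Law of the selected step `(N_{1:λ}, N_2, …, N_n)`: independent coordinates, the
first coordinate distributed as the minimum of `lam` i.i.d. standard normals and the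
other `n - 1` coordinates standard normal. -/
noncomputable def xiLaw (n lam : ℕ) : Measure (Fin n → ℝ) :=
  Measure.pi fun i => if (i : ℕ) = 0 then minLaw lam else gaussianReal 0 1

/-- For the `(1,λ)`-CSA-ES with cumulation parameter `0 < c ≤ 1`,
`lim_t E(ln(σ_{t+1}/σ_t)) = (1/(2 d_σ n)) (2(1−c) E(N_{1:λ})² + c (E(N_{1:λ}²) − 1))`. -/
theorem stmt_12 {n lam : ℕ} (hn : 1 ≤ n) (hlam : 1 ≤ lam)
    (c : ℝ) (hc0 : 0 < c) (hc1 : c ≤ 1) (d σ0 : ℝ) (hd : 0 < d) (hσ0 : 0 < σ0)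
    {Ω : Type*} [MeasureSpace Ω] [IsProbabilityMeasure (ℙ : Measure Ω)]
    (Z : ℕ → Ω → (Fin n → ℝ)) (hZmeas : ∀ t, Measurable (Z t))
    (hZindep : iIndepFun Z ℙ)
    (hZ0 : Measure.map (Z 0) ℙ = Measure.pi fun _ : Fin n => gaussianReal 0 1)
    (hZlaw : ∀ t, Measure.map (Z (t + 1)) ℙ = xiLaw n lam)
    (p : ℕ → Ω → (Fin n → ℝ)) (hp0 : p 0 = Z 0)
    (hprec : ∀ t ω i, p (t + 1) ω i =
      (1 - c) * p t ω i + Real.sqrt (c * (2 - c)) * Z (t + 1) ω i)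
    (σ : ℕ → Ω → ℝ) (h0 : ∀ ω, σ 0 ω = σ0)
    (hrec : ∀ t ω, σ (t + 1) ω =
      σ t ω * Real.exp ((c / (2 * d)) * ((∑ i, (p (t + 1) ω i) ^ 2) / n - 1)))
    :
    Tendsto (fun t : ℕ => ∫ ω, Real.log (σ (t + 1) ω / σ t ω) ∂ℙ) atTop
      (nhds ((1 / (2 * d * n)) * (2 * (1 - c) * (∫ x, x ∂(minLaw lam)) ^ 2 +
        c * ((∫ x, x ^ 2 ∂(minLaw lam)) - 1)))) := by
  classical
  set μ1 : ℝ := ∫ x, x ∂(minLaw lam) with hμ1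
  set ν : ℝ := ∫ x, x ^ 2 ∂(minLaw lam) with hν
  have hq : 0 < c * (2 - c) := by nlinarith
  have hs2 : Real.sqrt (c * (2 - c)) ^ 2 = c * (2 - c) := Real.sq_sqrt hq.le
  have hnR : (0:ℝ) < n := by exact_mod_cast hn
  -- measurability
  have hZim : ∀ t i, Measurable fun ω => Z t ω i :=
    fun t i => (measurable_pi_apply i).comp (hZmeas t)
  have hpmeas : ∀ t, Measurable (p t) := by
    intro t
    induction t with
    | zero => rw [hp0]; exact hZmeas 0
    | succ t ih =>
      have hpe : p (t+1) = fun ω i => (1-c) * p t ω i + Real.sqrt (c * (2 - c)) * Z (t+1) ω i :=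
        funext fun ω => funext fun i => hprec t ω i
      rw [hpe]
      exact measurable_pi_lambda _ fun i =>
        (((measurable_pi_apply i).comp ih).const_mul _).add ((hZim (t+1) i).const_mul _)
  have hpim : ∀ t i, Measurable fun ω => p t ω i :=
    fun t i => (measurable_pi_apply i).comp (hpmeas t)
  -- laws of coordinates
  have hmapZ0 : ∀ i, Measure.map (fun ω => Z 0 ω i) ℙ = gaussianReal 0 1 := by
    intro i
    have he : (fun ω => Z 0 ω i) = Function.eval i ∘ Z 0 := rfl
    rw [he, ← Measure.map_map (measurable_pi_apply i) (hZmeas 0), hZ0, aux_map_eval_pi]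
  haveI probfac : ∀ i : Fin n,
      IsProbabilityMeasure (if (i:ℕ) = 0 then minLaw lam else gaussianReal 0 1) :=
    fun i => by split <;> infer_instance
  have hmapZ : ∀ t (i : Fin n), Measure.map (fun ω => Z (t+1) ω i) ℙ
      = (if (i:ℕ) = 0 then minLaw lam else gaussianReal 0 1) := by
    intro t i
    have he : (fun ω => Z (t+1) ω i) = Function.eval i ∘ Z (t+1) := rfl
    rw [he, ← Measure.map_map (measurable_pi_apply i) (hZmeas (t+1)), hZlaw t]
    exact aux_map_eval_pi (fun i : Fin n => if (i:ℕ) = 0 then minLaw lam else gaussianReal 0 1) i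
  -- MemLp 2 of coordinates of Z
  have hZl2 : ∀ t i, MemLp (fun ω => Z t ω i) 2 ℙ := by
    intro t i
    cases t with
    | zero =>
      have := aux_gaussian_memLp2
      rw [← hmapZ0 i] at this
      exact (memLp_map_measure_iff aestronglyMeasurable_id (hZim 0 i).aemeasurable).1 this
    | succ t =>
      have hm : MemLp (fun x : ℝ => x) 2 (if (i:ℕ) = 0 then minLaw lam else gaussianReal 0 1) := by
        split
        · exact aux_memLp2_minLaw hlam
        · exact aux_gaussian_memLp2
      rw [← hmapZ t i] at hm
      exact (memLp_map_measure_iff aestronglyMeasurable_id (hZim (t+1) i).aemeasurable).1 hm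
  -- moments of coordinates of Z
  have hEZ0 : ∀ i, ∫ ω, Z 0 ω i ∂ℙ = 0 := by
    intro i
    have : ∫ ω, Z 0 ω i ∂ℙ = ∫ x, x ∂(Measure.map (fun ω => Z 0 ω i) ℙ) :=
      (integral_map (hZim 0 i).aemeasurable aestronglyMeasurable_id).symm
    rw [this, hmapZ0 i, aux_gaussian_integral_id]
  have hEZ : ∀ t (i : Fin n), ∫ ω, Z (t+1) ω i ∂ℙ = (if (i:ℕ) = 0 then μ1 else 0) := by
    intro t i
    have h1 : ∫ ω, Z (t+1) ω i ∂ℙ = ∫ x, x ∂(Measure.map (fun ω => Z (t+1) ω i) ℙ) :=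
      (integral_map (hZim (t+1) i).aemeasurable aestronglyMeasurable_id).symm
    rw [h1, hmapZ t i]
    split
    · rfl
    · exact aux_gaussian_integral_id
  have hEZsq : ∀ t (i : Fin n), ∫ ω, (Z (t+1) ω i) ^ 2 ∂ℙ = (if (i:ℕ) = 0 then ν else 1) := by
    intro t i
    have h1 : ∫ ω, (Z (t+1) ω i) ^ 2 ∂ℙ
        = ∫ x, x ^ 2 ∂(Measure.map (fun ω => Z (t+1) ω i) ℙ) :=
      (integral_map (hZim (t+1) i).aemeasurable
        (measurable_id.pow_const 2).aestronglyMeasurable).symm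
    rw [h1, hmapZ t i]
    split
    · rfl
    · exact aux_gaussian_integral_sq
  have hEZ0sq : ∀ i, ∫ ω, (Z 0 ω i) ^ 2 ∂ℙ = 1 := by
    intro i
    have h1 : ∫ ω, (Z 0 ω i) ^ 2 ∂ℙ
        = ∫ x, x ^ 2 ∂(Measure.map (fun ω => Z 0 ω i) ℙ) :=
      (integral_map (hZim 0 i).aemeasurable
        (measurable_id.pow_const 2).aestronglyMeasurable).symm
    rw [h1, hmapZ0 i, aux_gaussian_integral_sq]
  -- MemLp 2 of coordinates of p
  have hpl2 : ∀ t i, MemLp (fun ω => p t ω i) 2 ℙ := by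
    intro t
    induction t with
    | zero =>
      intro i
      have he : (fun ω => p 0 ω i) = fun ω => Z 0 ω i := by rw [hp0]
      rw [he]; exact hZl2 0 i
    | succ t ih =>
      intro i
      have he : (fun ω => p (t+1) ω i)
          = fun ω => (1-c) * p t ω i + Real.sqrt (c * (2 - c)) * Z (t+1) ω i :=
        funext fun ω => hprec t ω i
      rw [he]
      exact ((ih i).const_mul _).add ((hZl2 (t+1) i).const_mul _)
  have hIntp : ∀ t i, Integrable (fun ω => p t ω i) ℙ :=
    fun t i => (hpl2 t i).integrable one_le_two
  have hIntZ : ∀ t i, Integrable (fun ω => Z t ω i) ℙ :=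
    fun t i => (hZl2 t i).integrable one_le_two
  have hIntpsq : ∀ t i, Integrable (fun ω => (p t ω i) ^ 2) ℙ :=
    fun t i => (memLp_two_iff_integrable_sq (hpl2 t i).aestronglyMeasurable).1 (hpl2 t i)
  have hIntZsq : ∀ t i, Integrable (fun ω => (Z t ω i) ^ 2) ℙ :=
    fun t i => (memLp_two_iff_integrable_sq (hZl2 t i).aestronglyMeasurable).1 (hZl2 t i)
  -- independence
  have hg : ∀ t, ∃ g : (Fin (t+1) → (Fin n → ℝ)) → (Fin n → ℝ),
      Measurable g ∧ ∀ ω, p t ω = g (fun s => Z s ω) := by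
    intro t
    induction t with
    | zero =>
      refine ⟨fun v => v 0, measurable_pi_apply 0, fun ω => ?_⟩
      rw [hp0]
      simp
    | succ t ih =>
      obtain ⟨g, hgm, hgp⟩ := ih
      refine ⟨fun v i => (1 - c) * g (fun s => v s.castSucc) i
        + Real.sqrt (c * (2 - c)) * v (Fin.last (t+1)) i, ?_, ?_⟩
      · apply measurable_pi_lambda
        intro i
        have hrest : Measurable fun v : Fin (t+2) → Fin n → ℝ =>
            (fun s : Fin (t+1) => v s.castSucc) :=
          measurable_pi_lambda _ fun s => measurable_pi_apply _
        have hm1 : Measurable fun v : Fin (t+2) → Fin n → ℝ => g (fun s => v s.castSucc) i :=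
          (measurable_pi_apply i).comp (hgm.comp hrest)
        have hm2 : Measurable fun v : Fin (t+2) → Fin n → ℝ => v (Fin.last (t+1)) i :=
          (measurable_pi_apply i).comp (measurable_pi_apply (Fin.last (t+1)))
        exact (hm1.const_mul _).add (hm2.const_mul _)
      · intro ω
        funext i
        rw [hprec t ω i, hgp ω]
        simp only [Fin.coe_castSucc, Fin.val_last]
  have hindep : ∀ t (i : Fin n),
      IndepFun (fun ω => p t ω i) (fun ω => Z (t+1) ω i) ℙ := by
    intro t i
    obtain ⟨g, hgm, hgp⟩ := hg t
    have hdisj : Disjoint (Finset.range (t+1)) ({t+1} : Finset ℕ) := by simp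
    have h1 := hZindep.indepFun_finset (Finset.range (t+1)) {t+1} hdisj hZmeas
    set φ : (↥(Finset.range (t+1)) → (Fin n → ℝ)) → ℝ :=
      fun v => g (fun s : Fin (t+1) => v ⟨(s:ℕ), Finset.mem_range.2 s.isLt⟩) i with hφ
    set ψ : (↥({t+1} : Finset ℕ) → (Fin n → ℝ)) → ℝ :=
      fun v => v ⟨t+1, Finset.mem_singleton_self _⟩ i with hψ
    have hφm : Measurable φ := by
      apply Measurable.comp (measurable_pi_apply i)
      exact hgm.comp (measurable_pi_lambda _ fun s => measurable_pi_apply _)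
    have hψm : Measurable ψ :=
      (measurable_pi_apply i).comp (measurable_pi_apply _)
    have h2 := h1.comp hφm hψm
    have e1 : (fun ω => p t ω i)
        = φ ∘ (fun a (j : ↥(Finset.range (t+1))) => Z (j : ℕ) a) := by
      funext ω
      simp only [Function.comp_apply, hφ]
      rw [hgp ω]
    have e2 : (fun ω => Z (t+1) ω i)
        = ψ ∘ (fun a (j : ↥({t+1} : Finset ℕ)) => Z (j : ℕ) a) := rfl
    rw [e1, e2]
    exact h2
  -- first moment recursion
  have hA : ∀ t (i : Fin n), ∫ ω, p (t+1) ω i ∂ℙ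
      = (1-c) * (∫ ω, p t ω i ∂ℙ) + Real.sqrt (c * (2 - c)) * (∫ ω, Z (t+1) ω i ∂ℙ) := by
    intro t i
    have he : (fun ω => p (t+1) ω i)
        = fun ω => (1-c) * p t ω i + Real.sqrt (c * (2 - c)) * Z (t+1) ω i :=
      funext fun ω => hprec t ω i
    rw [he, integral_add ((hIntp t i).const_mul _) ((hIntZ (t+1) i).const_mul _),
      integral_const_mul, integral_const_mul]
  -- second moment recursion
  have hB : ∀ t (i : Fin n), ∫ ω, (p (t+1) ω i) ^ 2 ∂ℙ
      = (1-c)^2 * (∫ ω, (p t ω i) ^ 2 ∂ℙ)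
        + 2 * (1-c) * Real.sqrt (c * (2 - c)) * ((∫ ω, p t ω i ∂ℙ) * (∫ ω, Z (t+1) ω i ∂ℙ))
        + c * (2 - c) * (∫ ω, (Z (t+1) ω i) ^ 2 ∂ℙ) := by
    intro t i
    have hmul : Integrable (fun ω => p t ω i * Z (t+1) ω i) ℙ :=
      (hindep t i).integrable_mul (hIntp t i) (hIntZ (t+1) i)
    have he : (fun ω => (p (t+1) ω i) ^ 2)
        = fun ω => (1-c)^2 * (p t ω i) ^ 2
          + 2 * (1-c) * Real.sqrt (c * (2 - c)) * (p t ω i * Z (t+1) ω i)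
          + (Real.sqrt (c * (2 - c)))^2 * (Z (t+1) ω i) ^ 2 := by
      funext ω
      rw [hprec t ω i]
      ring
    have h1 : Integrable (fun ω => (1-c)^2 * (p t ω i) ^ 2) ℙ := (hIntpsq t i).const_mul _
    have h2 : Integrable (fun ω =>
        2 * (1-c) * Real.sqrt (c * (2 - c)) * (p t ω i * Z (t+1) ω i)) ℙ := hmul.const_mul _
    have h3 : Integrable (fun ω =>
        (Real.sqrt (c * (2 - c)))^2 * (Z (t+1) ω i) ^ 2) ℙ := (hIntZsq (t+1) i).const_mul _
    have h12 : Integrable (fun ω => (1-c)^2 * (p t ω i) ^ 2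
        + 2 * (1-c) * Real.sqrt (c * (2 - c)) * (p t ω i * Z (t+1) ω i)) ℙ := h1.add h2
    have hcross : ∫ ω, p t ω i * Z (t+1) ω i ∂ℙ
        = (∫ ω, p t ω i ∂ℙ) * ∫ ω, Z (t+1) ω i ∂ℙ :=
      (hindep t i).integral_mul_eq_mul_integral (hIntp t i).aestronglyMeasurable (hIntZ (t+1) i).aestronglyMeasurable
    rw [he, integral_add h12 h3, integral_add h1 h2,
      integral_const_mul, integral_const_mul, integral_const_mul, hcross, hs2]
  -- limits of second moments, coordinatewise
  set i0 : Fin n := ⟨0, hn⟩ with hi0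
  set L0 : ℝ := 2 * (1 - c) * μ1 ^ 2 / c + ν with hL0
  have hr1 : 0 ≤ 1 - c := by linarith
  have hr2 : 1 - c < 1 := by linarith
  have hrsq1 : (1-c)^2 < 1 := by nlinarith
  have hrsq0 : 0 ≤ (1-c)^2 := sq_nonneg _
  have hone : (1:ℝ) - (1-c)^2 = c * (2-c) := by ring
  have hBlim : ∀ i : Fin n, Tendsto (fun t => ∫ ω, (p t ω i) ^ 2 ∂ℙ) atTop
      (nhds (if (i:ℕ) = 0 then L0 else 1)) := by
    intro i
    by_cases hi : (i:ℕ) = 0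
    · -- first coordinate
      have hEZi : ∀ t, ∫ ω, Z (t+1) ω i ∂ℙ = μ1 := fun t => by rw [hEZ t i, if_pos hi]
      have hEZsqi : ∀ t, ∫ ω, (Z (t+1) ω i) ^ 2 ∂ℙ = ν := fun t => by rw [hEZsq t i, if_pos hi]
      -- limit of first moment
      have hA0 : ∫ ω, p 0 ω i ∂ℙ = 0 := by
        have he : (fun ω => p 0 ω i) = fun ω => Z 0 ω i := by rw [hp0]
        rw [he, hEZ0 i]
      have hAt : Tendsto (fun t => ∫ ω, p t ω i ∂ℙ) atTop
          (nhds (Real.sqrt (c * (2 - c)) * μ1 / c)) := by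
        have := aux_affine_rec hr1 hr2
          (tendsto_const_nhds (x := Real.sqrt (c * (2 - c)) * μ1) (f := atTop))
          (x := fun t => ∫ ω, p t ω i ∂ℙ)
          (fun t => by rw [hA t i, hEZi t])
        convert this using 2
        ring_nf
      -- limit of second moment
      have hu : Tendsto (fun t => 2 * (1-c) * Real.sqrt (c * (2 - c))
          * ((∫ ω, p t ω i ∂ℙ) * μ1) + c * (2 - c) * ν) atTop
          (nhds (2 * (1-c) * Real.sqrt (c * (2 - c))
            * ((Real.sqrt (c * (2 - c)) * μ1 / c) * μ1) + c * (2 - c) * ν)) := by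
        exact (((hAt.mul_const μ1).const_mul _).add_const _)
      have hlim := aux_affine_rec hrsq0 hrsq1 hu
        (x := fun t => ∫ ω, (p t ω i) ^ 2 ∂ℙ)
        (fun t => by rw [hB t i, hEZi t, hEZsqi t]; ring)
      rw [if_pos hi]
      convert hlim using 2
      have hss : Real.sqrt (c * (2 - c)) * Real.sqrt (c * (2 - c)) = c * (2 - c) :=
        Real.mul_self_sqrt hq.le
      rw [hone, hL0, eq_div_iff (ne_of_gt hq)]
      linear_combination (-(2 * (1 - c) * μ1 ^ 2 / c)) * hss
    · -- other coordinates
      have hEZi : ∀ t, ∫ ω, Z (t+1) ω i ∂ℙ = 0 := fun t => by rw [hEZ t i, if_neg hi]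
      have hEZsqi : ∀ t, ∫ ω, (Z (t+1) ω i) ^ 2 ∂ℙ = 1 := fun t => by rw [hEZsq t i, if_neg hi]
      have hlim := aux_affine_rec hrsq0 hrsq1
        (tendsto_const_nhds (x := c * (2-c)) (f := atTop))
        (x := fun t => ∫ ω, (p t ω i) ^ 2 ∂ℙ)
        (fun t => by rw [hB t i, hEZi t, hEZsqi t]; ring)
      rw [if_neg hi]
      convert hlim using 2
      rw [hone, div_self (ne_of_gt hq)]
  -- sum over coordinates
  have hSum : Tendsto (fun t => ∑ i : Fin n, ∫ ω, (p t ω i) ^ 2 ∂ℙ) atTop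
      (nhds (L0 + ((n:ℝ) - 1))) := by
    have h1 := tendsto_finset_sum Finset.univ (fun i (_ : i ∈ Finset.univ) => hBlim i)
    have h2 : ∑ i : Fin n, (if (i:ℕ) = 0 then L0 else 1) = L0 + ((n:ℝ) - 1) := by
      have he : ∀ i : Fin n, (if (i:ℕ) = 0 then L0 else (1:ℝ))
          = (if i = i0 then L0 - 1 else 0) + 1 := by
        intro i
        have : ((i:ℕ) = 0) ↔ (i = i0) := by
          rw [Fin.ext_iff]
        rcases eq_or_ne i i0 with rfl | hne
        · simp [this]
        · rw [if_neg (by rwa [this]), if_neg hne]; ring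
      rw [Finset.sum_congr rfl (fun i _ => he i), Finset.sum_add_distrib,
        Finset.sum_ite_eq' Finset.univ i0 (fun _ => L0 - 1), if_pos (Finset.mem_univ i0)]
      simp only [Finset.sum_const, Finset.card_univ, Fintype.card_fin, nsmul_eq_mul, mul_one]
      ring
    rw [← h2]
    exact h1
  -- the expected log ratio
  have hσpos : ∀ t ω, 0 < σ t ω := by
    intro t
    induction t with
    | zero => intro ω; rw [h0 ω]; exact hσ0
    | succ t ih => intro ω; rw [hrec t ω]; exact mul_pos (ih ω) (Real.exp_pos _)
  have hlogeq : ∀ t, (fun ω => Real.log (σ (t + 1) ω / σ t ω))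
      = fun ω => (c / (2 * d)) * ((∑ i, (p (t + 1) ω i) ^ 2) / n - 1) := by
    intro t
    funext ω
    rw [hrec t ω, mul_comm, mul_div_assoc, div_self (ne_of_gt (hσpos t ω)), mul_one,
      Real.log_exp]
  have hEt : ∀ t, ∫ ω, Real.log (σ (t + 1) ω / σ t ω) ∂ℙ
      = (c / (2 * d)) * ((∑ i : Fin n, ∫ ω, (p (t+1) ω i) ^ 2 ∂ℙ) / n - 1) := by
    intro t
    rw [hlogeq t, integral_const_mul]
    congr 1
    have hintS : Integrable (fun ω => ∑ i : Fin n, (p (t+1) ω i) ^ 2) ℙ :=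
      integrable_finset_sum _ fun i _ => hIntpsq (t+1) i
    rw [integral_sub (hintS.div_const _) (integrable_const 1)]
    rw [integral_div, integral_finset_sum _ fun i _ => hIntpsq (t+1) i]
    simp [measure_univ]
  -- conclude
  have hfinal : Tendsto (fun t => (c / (2 * d))
      * ((∑ i : Fin n, ∫ ω, (p (t+1) ω i) ^ 2 ∂ℙ) / n - 1)) atTop
      (nhds ((c / (2 * d)) * ((L0 + ((n:ℝ) - 1)) / n - 1))) := by
    have hshift : Tendsto (fun t => ∑ i : Fin n, ∫ ω, (p (t+1) ω i) ^ 2 ∂ℙ) atTop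
        (nhds (L0 + ((n:ℝ) - 1))) :=
      hSum.comp (tendsto_add_atTop_nat 1)
    exact (((hshift.div_const _).sub_const 1).const_mul _)
  have heq : (c / (2 * d)) * ((L0 + ((n:ℝ) - 1)) / n - 1)
      = (1 / (2 * d * n)) * (2 * (1 - c) * μ1 ^ 2 + c * (ν - 1)) := by
    rw [hL0]
    field_simp
    ring
  rw [← heq]
  have hfun : (fun t : ℕ => ∫ ω, Real.log (σ (t + 1) ω / σ t ω) ∂ℙ)
      = fun t => (c / (2 * d)) * ((∑ i : Fin n, ∫ ω, (p (t+1) ω i) ^ 2 ∂ℙ) / n - 1) :=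
    funext hEt
  rw [hfun]
  exact hfinal
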